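/- Let [F̲,F̄] be a p-box with focal sets A_γ = [F̄⁻¹(γ), F̲⁻¹(γ)], and h : ℝ → ℝ bounded measurable. Then for every F ∈ Φ(F̲,F̄), ∫_0^1 inf_{x∈A_γ} h(x) dγ ≤ ∫_ℝ h dF ≤ ∫_0^1 sup_{x∈A_γ} h(x) dγ. Consequently E̲(h) ≥ ∫_0^1 inf_{x∈A_γ} h(x) dγ and Ē(h) ≤ ∫_0^1 sup_{x∈A_γ} h(x) dγ. -/

import Mathlib

open Set Filter MeasureTheory

namespace RandomSetAux

/-- Generalized inverse (quantile function) of a Stieltjes function. -/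
noncomputable def Q (F : StieltjesFunction ℝ) (γ : ℝ) : ℝ := sInf {x | γ ≤ F x}

lemma S_nonempty (F : StieltjesFunction ℝ) (htop : Tendsto F atTop (nhds 1)) {γ : ℝ}
    (hγ : γ < 1) : {x | γ ≤ F x}.Nonempty := by
  obtain ⟨x, hx⟩ := (htop.eventually (eventually_gt_nhds hγ)).exists
  exact ⟨x, hx.le⟩

lemma S_bddBelow (F : StieltjesFunction ℝ) (hbot : Tendsto F atBot (nhds 0)) {γ : ℝ}
    (hγ : 0 < γ) : BddBelow {x | γ ≤ F x} := by
  obtain ⟨x₀, hx₀⟩ := (hbot.eventually (eventually_lt_nhds hγ)).exists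
  refine ⟨x₀, fun s hs => ?_⟩
  by_contra hcon
  push_neg at hcon
  exact absurd (hs.trans (F.mono hcon.le)) (not_le.mpr hx₀)

lemma S_closed (F : StieltjesFunction ℝ) (γ : ℝ) : IsClosed {x | γ ≤ F x} := by
  rw [← isOpen_compl_iff, isOpen_iff_mem_nhds]
  intro x hx
  simp only [mem_compl_iff, mem_setOf_eq, not_le] at hx
  have hev : ∀ᶠ y in nhdsWithin x (Ici x), F y < γ :=
    (F.right_continuous x).eventually (eventually_lt_nhds hx)
  obtain ⟨u, hu_open, hxu, hu⟩ := mem_nhdsWithin.mp hev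
  refine mem_of_superset (hu_open.mem_nhds hxu) fun y hy => ?_
  simp only [mem_compl_iff, mem_setOf_eq, not_le]
  rcases le_or_gt x y with hxy | hxy
  · exact hu ⟨hy, hxy⟩
  · exact lt_of_le_of_lt (F.mono hxy.le) hx

lemma le_F_Q (F : StieltjesFunction ℝ) (hbot : Tendsto F atBot (nhds 0))
    (htop : Tendsto F atTop (nhds 1)) {γ : ℝ} (h0 : 0 < γ) (h1 : γ < 1) :
    γ ≤ F (Q F γ) :=
  (S_closed F γ).csInf_mem (S_nonempty F htop h1) (S_bddBelow F hbot h0)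

lemma Q_le_iff (F : StieltjesFunction ℝ) (hbot : Tendsto F atBot (nhds 0))
    (htop : Tendsto F atTop (nhds 1)) {γ x : ℝ} (h0 : 0 < γ) (h1 : γ < 1) :
    Q F γ ≤ x ↔ γ ≤ F x := by
  constructor
  · intro hq; exact (le_F_Q F hbot htop h0 h1).trans (F.mono hq)
  · intro hx; exact csInf_le (S_bddBelow F hbot h0) hx

lemma Q_monoOn (F : StieltjesFunction ℝ) (hbot : Tendsto F atBot (nhds 0))
    (htop : Tendsto F atTop (nhds 1)) : MonotoneOn (Q F) (Ioo 0 1) := by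
  intro γ₁ h₁ γ₂ h₂ h12
  exact csInf_le_csInf (S_bddBelow F hbot h₁.1) (S_nonempty F htop h₂.2)
    (fun x hx => h12.trans hx)

/-- The quantile transform pushes Lebesgue measure on `(0,1)` to `F.measure`. -/
lemma map_Q (F : StieltjesFunction ℝ) (hbot : Tendsto F atBot (nhds 0))
    (htop : Tendsto F atTop (nhds 1))
    (hQm : AEMeasurable (Q F) (volume.restrict (Ioo (0:ℝ) 1))) :
    (volume.restrict (Ioo (0:ℝ) 1)).map (Q F) = F.measure := by
  have hmass : (volume.restrict (Ioo (0:ℝ) 1)).map (Q F) univ = 1 := by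
    rw [Measure.map_apply_of_aemeasurable hQm MeasurableSet.univ]
    simp [Real.volume_Ioo]
  haveI : IsFiniteMeasure ((volume.restrict (Ioo (0:ℝ) 1)).map (Q F)) :=
    ⟨by simp [hmass]⟩
  refine Measure.ext_of_Iic _ _ fun x => ?_
  rw [Measure.map_apply_of_aemeasurable hQm measurableSet_Iic,
      Measure.restrict_apply' measurableSet_Ioo, F.measure_Iic hbot, sub_zero]
  have hset : Q F ⁻¹' Iic x ∩ Ioo (0:ℝ) 1 = Iic (F x) ∩ Ioo 0 1 := by
    ext γ
    simp only [mem_inter_iff, mem_preimage, mem_Iic, mem_Ioo, and_congr_left_iff]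
    intro hγ
    exact Q_le_iff F hbot htop hγ.1 hγ.2
  rw [hset]
  have h1 : F x ≤ 1 := ge_of_tendsto htop (eventually_atTop.mpr ⟨x, fun y hy => F.mono hy⟩)
  rcases lt_or_eq_of_le h1 with h1' | h1'
  · have : Iic (F x) ∩ Ioo (0:ℝ) 1 = Ioc 0 (F x) := by
      ext γ
      simp only [mem_inter_iff, mem_Iic, mem_Ioo, mem_Ioc]
      constructor
      · rintro ⟨hle, h0γ, _⟩; exact ⟨h0γ, hle⟩
      · rintro ⟨h0γ, hle⟩; exact ⟨hle, h0γ, lt_of_le_of_lt hle h1'⟩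
    rw [this, Real.volume_Ioc, sub_zero]
  · have : Iic (F x) ∩ Ioo (0:ℝ) 1 = Ioo 0 1 :=
      inter_eq_right.mpr fun γ hγ => h1' ▸ hγ.2.le
    rw [this, Real.volume_Ioo, h1']
    norm_num

lemma TA_nonempty (Fu : StieltjesFunction ℝ) (hbot : Tendsto Fu atBot (nhds 0)) {γ : ℝ}
    (hγ : 0 < γ) : {x | Fu x < γ}.Nonempty :=
  (hbot.eventually (eventually_lt_nhds hγ)).exists

lemma TA_bddAbove (Fu : StieltjesFunction ℝ) (htop : Tendsto Fu atTop (nhds 1)) {γ : ℝ}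
    (hγ : γ < 1) : BddAbove {x | Fu x < γ} := by
  obtain ⟨s, hs⟩ := (htop.eventually (eventually_gt_nhds hγ)).exists
  refine ⟨s, fun x hx => ?_⟩
  by_contra hcon
  push_neg at hcon
  exact absurd (lt_of_le_of_lt (Fu.mono hcon.le) hx) (not_lt.mpr hs.le)

lemma TB_nonempty (Fl : StieltjesFunction ℝ) (htop : Tendsto Fl atTop (nhds 1)) {γ : ℝ}
    (hγ : γ < 1) : {x | Fl x > γ}.Nonempty :=
  (htop.eventually (eventually_gt_nhds hγ)).exists

lemma TB_bddBelow (Fl : StieltjesFunction ℝ) (hbot : Tendsto Fl atBot (nhds 0)) {γ : ℝ}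
    (hγ : 0 < γ) : BddBelow {x | Fl x > γ} := by
  obtain ⟨x₀, hx₀⟩ := (hbot.eventually (eventually_lt_nhds hγ)).exists
  refine ⟨x₀, fun s hs => ?_⟩
  by_contra hcon
  push_neg at hcon
  exact absurd (lt_trans hs (lt_of_le_of_lt (Fl.mono hcon.le) hx₀)) (lt_irrefl _)

lemma A_monoOn (Fu : StieltjesFunction ℝ) (hbot : Tendsto Fu atBot (nhds 0))
    (htop : Tendsto Fu atTop (nhds 1)) :
    MonotoneOn (fun γ => sSup {x | Fu x < γ}) (Ioo (0:ℝ) 1) := by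
  intro γ₁ h₁ γ₂ h₂ h12
  exact csSup_le_csSup (TA_bddAbove Fu htop h₂.2) (TA_nonempty Fu hbot h₁.1)
    (fun x hx => lt_of_lt_of_le hx h12)

lemma B_monoOn (Fl : StieltjesFunction ℝ) (hbot : Tendsto Fl atBot (nhds 0))
    (htop : Tendsto Fl atTop (nhds 1)) :
    MonotoneOn (fun γ => sInf {x | Fl x > γ}) (Ioo (0:ℝ) 1) := by
  intro γ₁ h₁ γ₂ h₂ h12
  exact csInf_le_csInf (TB_bddBelow Fl hbot h₁.1) (TB_nonempty Fl htop h₂.2)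
    (fun x hx => lt_of_le_of_lt h12 hx)

/-- The quantile of `F` lies in the focal interval `[Fu⁻¹(γ), Fl⁻¹(γ)]`. -/
lemma Q_mem_Icc (F Fl Fu : StieltjesFunction ℝ)
    (hbotF : Tendsto F atBot (nhds 0)) (htopF : Tendsto F atTop (nhds 1))
    (hbotu : Tendsto Fu atBot (nhds 0)) (htopl : Tendsto Fl atTop (nhds 1))
    (hbd : ∀ x, Fl x ≤ F x ∧ F x ≤ Fu x) {γ : ℝ} (h0 : 0 < γ) (h1 : γ < 1) :
    Q F γ ∈ Icc (sSup {x | Fu x < γ}) (sInf {x | Fl x > γ}) := by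
  constructor
  · refine csSup_le (TA_nonempty Fu hbotu h0) fun t ht => ?_
    refine le_csInf (S_nonempty F htopF h1) fun s hs => ?_
    by_contra hc
    push_neg at hc
    have h1' : F s ≤ F t := F.mono hc.le
    have h2' := (hbd t).2
    simp only [mem_setOf_eq] at ht hs
    linarith
  · exact csInf_le_csInf (S_bddBelow F hbotF h0) (TB_nonempty Fl htopl h1)
      (fun x hx => (lt_of_lt_of_le hx (hbd x).1).le)

/-- Supremum (in `EReal`) of a Borel set capped at `t`; a monotone function of `t`. -/
noncomputable def betaE (B : Set ℝ) (t : ℝ) : EReal := sSup (Real.toEReal '' (B ∩ Iic t))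

lemma betaE_mono (B : Set ℝ) : Monotone (betaE B) := fun s t hst =>
  sSup_le_sSup (image_mono (inter_subset_inter_right _ (Iic_subset_Iic.mpr hst)))

lemma exists_mem_Icc_iff {B : Set ℝ} {a b : ℝ} (hab : a ≤ b) :
    (∃ x ∈ Icc a b, x ∈ B) ↔ ((a : EReal) < betaE B b ∨ a ∈ B) := by
  constructor
  · rintro ⟨x, hxI, hxB⟩
    rcases eq_or_lt_of_le hxI.1 with heq | hax
    · right; exact heq ▸ hxB
    · left
      refine lt_of_lt_of_le ?_ (le_sSup (mem_image_of_mem _ ⟨hxB, hxI.2⟩))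
      exact_mod_cast hax
  · rintro (hlt | haB)
    · rw [betaE, lt_sSup_iff] at hlt
      obtain ⟨y, hy, hay⟩ := hlt
      obtain ⟨x, ⟨hxB, hxb⟩, rfl⟩ := hy
      refine ⟨x, ⟨?_, hxb⟩, hxB⟩
      exact_mod_cast hay.le
    · exact ⟨a, ⟨le_refl a, hab⟩, haB⟩

/-- `γ ↦ inf h([a γ, b γ])` is a.e.-measurable when `a, b` are. -/
lemma aemeasurable_sInf_Icc {μ : Measure ℝ} {a b : ℝ → ℝ} (ha : AEMeasurable a μ)
    (hb : AEMeasurable b μ) (hab : ∀ᵐ γ ∂μ, a γ ≤ b γ)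
    {h : ℝ → ℝ} (hmeas : Measurable h) {C : ℝ} (hbd : ∀ x, |h x| ≤ C) :
    AEMeasurable (fun γ => sInf (h '' Icc (a γ) (b γ))) μ := by
  have key : ∀ c : ℝ,
      NullMeasurableSet ((fun γ => sInf (h '' Icc (a γ) (b γ))) ⁻¹' Iio c) μ := by
    intro c
    have hEm : NullMeasurableSet
        ({γ | (a γ : EReal) < betaE {x | h x < c} (b γ)} ∪ {γ | h (a γ) < c}) μ := by
      apply NullMeasurableSet.union
      · exact nullMeasurableSet_lt (measurable_coe_real_ereal.comp_aemeasurable ha)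
          (((betaE_mono {x | h x < c}).measurable).comp_aemeasurable hb)
      · exact (hmeas.comp_aemeasurable ha).nullMeasurable measurableSet_Iio
    refine hEm.congr (eventuallyEq_set.mpr ?_)
    filter_upwards [hab] with γ hγab
    simp only [mem_union, mem_setOf_eq, mem_preimage, mem_Iio]
    have himg_ne : (h '' Icc (a γ) (b γ)).Nonempty := (nonempty_Icc.mpr hγab).image h
    have himg_bdd : BddBelow (h '' Icc (a γ) (b γ)) := by
      refine ⟨-C, ?_⟩
      rintro y ⟨x, -, rfl⟩
      exact (abs_le.mp (hbd x)).1
    rw [csInf_lt_iff himg_bdd himg_ne]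
    constructor
    · intro hor
      obtain ⟨x, hxI, hxB⟩ := (exists_mem_Icc_iff hγab).mpr hor
      exact ⟨h x, mem_image_of_mem h hxI, hxB⟩
    · rintro ⟨y, ⟨x, hxI, rfl⟩, hyc⟩
      exact (exists_mem_Icc_iff hγab).mp ⟨x, hxI, hyc⟩
  have hnm : NullMeasurable (fun γ => sInf (h '' Icc (a γ) (b γ))) μ :=
    measurable_of_Iio (δ := NullMeasurableSpace ℝ μ) key
  exact hnm.aemeasurable

/-- `γ ↦ sup h([a γ, b γ])` is a.e.-measurable when `a, b` are. -/
lemma aemeasurable_sSup_Icc {μ : Measure ℝ} {a b : ℝ → ℝ} (ha : AEMeasurable a μ)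
    (hb : AEMeasurable b μ) (hab : ∀ᵐ γ ∂μ, a γ ≤ b γ)
    {h : ℝ → ℝ} (hmeas : Measurable h) {C : ℝ} (hbd : ∀ x, |h x| ≤ C) :
    AEMeasurable (fun γ => sSup (h '' Icc (a γ) (b γ))) μ := by
  have key : ∀ c : ℝ,
      NullMeasurableSet ((fun γ => sSup (h '' Icc (a γ) (b γ))) ⁻¹' Ioi c) μ := by
    intro c
    have hEm : NullMeasurableSet
        ({γ | (a γ : EReal) < betaE {x | c < h x} (b γ)} ∪ {γ | c < h (a γ)}) μ := by
      apply NullMeasurableSet.union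
      · exact nullMeasurableSet_lt (measurable_coe_real_ereal.comp_aemeasurable ha)
          (((betaE_mono {x | c < h x}).measurable).comp_aemeasurable hb)
      · exact (hmeas.comp_aemeasurable ha).nullMeasurable measurableSet_Ioi
    refine hEm.congr (eventuallyEq_set.mpr ?_)
    filter_upwards [hab] with γ hγab
    simp only [mem_union, mem_setOf_eq, mem_preimage, mem_Ioi]
    have himg_ne : (h '' Icc (a γ) (b γ)).Nonempty := (nonempty_Icc.mpr hγab).image h
    have himg_bdd : BddAbove (h '' Icc (a γ) (b γ)) := by
      refine ⟨C, ?_⟩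
      rintro y ⟨x, -, rfl⟩
      exact (abs_le.mp (hbd x)).2
    rw [lt_csSup_iff himg_bdd himg_ne]
    constructor
    · intro hor
      obtain ⟨x, hxI, hxB⟩ := (exists_mem_Icc_iff hγab).mpr hor
      exact ⟨h x, mem_image_of_mem h hxI, hxB⟩
    · rintro ⟨y, ⟨x, hxI, rfl⟩, hyc⟩
      exact (exists_mem_Icc_iff hγab).mp ⟨x, hxI, hyc⟩
  have hnm : NullMeasurable (fun γ => sSup (h '' Icc (a γ) (b γ))) μ :=
    measurable_of_Ioi (δ := NullMeasurableSpace ℝ μ) key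
  exact hnm.aemeasurable

end RandomSetAux

open RandomSetAux

/-- The random-set (Choquet) bounds sandwich every expectation over
the p-box, hence bound the lower and upper expectations. -/
theorem random_set_expectation_bounds
    (Fl Fu : StieltjesFunction ℝ)
    (hFl : Tendsto Fl atBot (nhds 0) ∧ Tendsto Fl atTop (nhds 1))
    (hFu : Tendsto Fu atBot (nhds 0) ∧ Tendsto Fu atTop (nhds 1))
    (hle : ∀ x, Fl x ≤ Fu x)
    (h : ℝ → ℝ) (C : ℝ) (hbd : ∀ x, |h x| ≤ C) (hmeas : Measurable h)
    (Φ : Set (StieltjesFunction ℝ))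
    (hΦ : Φ = {F : StieltjesFunction ℝ | (Tendsto F atBot (nhds 0) ∧ Tendsto F atTop (nhds 1)) ∧
          ∀ x, Fl x ≤ F x ∧ F x ≤ Fu x})
    (hne : Φ.Nonempty) :
    (∀ F ∈ Φ,
      (∫ γ in (0:ℝ)..1,
          sInf (h '' Icc (sSup {x : ℝ | Fu x < γ}) (sInf {x : ℝ | Fl x > γ})))
        ≤ ∫ x, h x ∂F.measure ∧
      ∫ x, h x ∂F.measure ≤
        ∫ γ in (0:ℝ)..1,
          sSup (h '' Icc (sSup {x : ℝ | Fu x < γ}) (sInf {x : ℝ | Fl x > γ}))) ∧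
    (∫ γ in (0:ℝ)..1,
        sInf (h '' Icc (sSup {x : ℝ | Fu x < γ}) (sInf {x : ℝ | Fl x > γ})))
      ≤ sInf ((fun F : StieltjesFunction ℝ => ∫ x, h x ∂F.measure) '' Φ) ∧
    sSup ((fun F : StieltjesFunction ℝ => ∫ x, h x ∂F.measure) '' Φ) ≤
      ∫ γ in (0:ℝ)..1,
        sSup (h '' Icc (sSup {x : ℝ | Fu x < γ}) (sInf {x : ℝ | Fl x > γ})) := by
  obtain ⟨F₀, hF₀⟩ := hne
  have hF₀' : (Tendsto F₀ atBot (nhds 0) ∧ Tendsto F₀ atTop (nhds 1)) ∧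
      ∀ x, Fl x ≤ F₀ x ∧ F₀ x ≤ Fu x := by rw [hΦ] at hF₀; exact hF₀
  haveI : IsFiniteMeasure (volume.restrict (Ioo (0:ℝ) 1)) :=
    ⟨by simp [Measure.restrict_apply, Real.volume_Ioo]⟩
  -- measurability of the endpoint functions
  have haM : AEMeasurable (fun γ : ℝ => sSup {x : ℝ | Fu x < γ})
      (volume.restrict (Ioo (0:ℝ) 1)) :=
    aemeasurable_restrict_of_monotoneOn measurableSet_Ioo (A_monoOn Fu hFu.1 hFu.2)
  have hbM : AEMeasurable (fun γ : ℝ => sInf {x : ℝ | Fl x > γ})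
      (volume.restrict (Ioo (0:ℝ) 1)) :=
    aemeasurable_restrict_of_monotoneOn measurableSet_Ioo (B_monoOn Fl hFl.1 hFl.2)
  -- the focal intervals are nonempty on (0,1)
  have hab : ∀ γ ∈ Ioo (0:ℝ) 1, sSup {x : ℝ | Fu x < γ} ≤ sInf {x : ℝ | Fl x > γ} := by
    intro γ hγ
    have hmem := Q_mem_Icc F₀ Fl Fu hF₀'.1.1 hF₀'.1.2 hFu.1 hFl.2 hF₀'.2 hγ.1 hγ.2
    exact hmem.1.trans hmem.2
  have hab' : ∀ᵐ γ ∂(volume.restrict (Ioo (0:ℝ) 1)),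
      sSup {x : ℝ | Fu x < γ} ≤ sInf {x : ℝ | Fl x > γ} := by
    filter_upwards [ae_restrict_mem measurableSet_Ioo] with γ hγ using hab γ hγ
  have hφM := aemeasurable_sInf_Icc haM hbM hab' hmeas hbd
  have hψM := aemeasurable_sSup_Icc haM hbM hab' hmeas hbd
  -- pointwise bounds for the inf/sup functions on (0,1)
  have himg_ne : ∀ γ ∈ Ioo (0:ℝ) 1,
      (h '' Icc (sSup {x : ℝ | Fu x < γ}) (sInf {x : ℝ | Fl x > γ})).Nonempty :=
    fun γ hγ => (nonempty_Icc.mpr (hab γ hγ)).image h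
  have himg_bddBelow : ∀ γ : ℝ,
      BddBelow (h '' Icc (sSup {x : ℝ | Fu x < γ}) (sInf {x : ℝ | Fl x > γ})) := by
    intro γ
    refine ⟨-C, ?_⟩
    rintro y ⟨x, -, rfl⟩
    exact (abs_le.mp (hbd x)).1
  have himg_bddAbove : ∀ γ : ℝ,
      BddAbove (h '' Icc (sSup {x : ℝ | Fu x < γ}) (sInf {x : ℝ | Fl x > γ})) := by
    intro γ
    refine ⟨C, ?_⟩
    rintro y ⟨x, -, rfl⟩
    exact (abs_le.mp (hbd x)).2
  have hφbd : ∀ γ ∈ Ioo (0:ℝ) 1,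
      ‖sInf (h '' Icc (sSup {x : ℝ | Fu x < γ}) (sInf {x : ℝ | Fl x > γ}))‖ ≤ C := by
    intro γ hγ
    rw [Real.norm_eq_abs, abs_le]
    constructor
    · exact le_csInf (himg_ne γ hγ) (by rintro y ⟨x, -, rfl⟩; exact (abs_le.mp (hbd x)).1)
    · obtain ⟨y, hy⟩ := himg_ne γ hγ
      refine (csInf_le (himg_bddBelow γ) hy).trans ?_
      obtain ⟨x, -, rfl⟩ := hy
      exact (abs_le.mp (hbd x)).2
  have hψbd : ∀ γ ∈ Ioo (0:ℝ) 1,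
      ‖sSup (h '' Icc (sSup {x : ℝ | Fu x < γ}) (sInf {x : ℝ | Fl x > γ}))‖ ≤ C := by
    intro γ hγ
    rw [Real.norm_eq_abs, abs_le]
    constructor
    · obtain ⟨y, hy⟩ := himg_ne γ hγ
      refine le_trans ?_ (le_csSup (himg_bddAbove γ) hy)
      obtain ⟨x, -, rfl⟩ := hy
      exact (abs_le.mp (hbd x)).1
    · exact csSup_le (himg_ne γ hγ) (by rintro y ⟨x, -, rfl⟩; exact (abs_le.mp (hbd x)).2)
  have hφint : Integrable
      (fun γ => sInf (h '' Icc (sSup {x : ℝ | Fu x < γ}) (sInf {x : ℝ | Fl x > γ})))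
      (volume.restrict (Ioo (0:ℝ) 1)) := by
    refine ⟨hφM.aestronglyMeasurable, HasFiniteIntegral.of_bounded (C := C) ?_⟩
    filter_upwards [ae_restrict_mem measurableSet_Ioo] with γ hγ using hφbd γ hγ
  have hψint : Integrable
      (fun γ => sSup (h '' Icc (sSup {x : ℝ | Fu x < γ}) (sInf {x : ℝ | Fl x > γ})))
      (volume.restrict (Ioo (0:ℝ) 1)) := by
    refine ⟨hψM.aestronglyMeasurable, HasFiniteIntegral.of_bounded (C := C) ?_⟩
    filter_upwards [ae_restrict_mem measurableSet_Ioo] with γ hγ using hψbd γ hγ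
  -- main sandwich for each F in the p-box
  have main : ∀ F ∈ Φ,
      (∫ γ in (0:ℝ)..1,
          sInf (h '' Icc (sSup {x : ℝ | Fu x < γ}) (sInf {x : ℝ | Fl x > γ})))
        ≤ ∫ x, h x ∂F.measure ∧
      ∫ x, h x ∂F.measure ≤
        ∫ γ in (0:ℝ)..1,
          sSup (h '' Icc (sSup {x : ℝ | Fu x < γ}) (sInf {x : ℝ | Fl x > γ})) := by
    intro F hF
    rw [hΦ] at hF
    obtain ⟨⟨hFbot, hFtop⟩, hFbd⟩ := hF
    have hQM : AEMeasurable (Q F) (volume.restrict (Ioo (0:ℝ) 1)) :=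
      aemeasurable_restrict_of_monotoneOn measurableSet_Ioo (Q_monoOn F hFbot hFtop)
    have hint : ∫ x, h x ∂F.measure = ∫ γ in Ioo (0:ℝ) 1, h (Q F γ) := by
      rw [← map_Q F hFbot hFtop hQM, integral_map hQM hmeas.aestronglyMeasurable]
    have hQmem : ∀ γ ∈ Ioo (0:ℝ) 1,
        Q F γ ∈ Icc (sSup {x : ℝ | Fu x < γ}) (sInf {x : ℝ | Fl x > γ}) :=
      fun γ hγ => Q_mem_Icc F Fl Fu hFbot hFtop hFu.1 hFl.2 hFbd hγ.1 hγ.2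
    have hhQint : Integrable (fun γ => h (Q F γ)) (volume.restrict (Ioo (0:ℝ) 1)) := by
      refine ⟨(hmeas.comp_aemeasurable hQM).aestronglyMeasurable,
        HasFiniteIntegral.of_bounded (C := C) (ae_of_all _ fun γ => ?_)⟩
      rw [Real.norm_eq_abs]
      exact hbd (Q F γ)
    constructor
    · rw [intervalIntegral.integral_of_le zero_le_one, integral_Ioc_eq_integral_Ioo, hint]
      refine integral_mono_ae hφint hhQint ?_
      filter_upwards [ae_restrict_mem measurableSet_Ioo] with γ hγ
      exact csInf_le (himg_bddBelow γ) (mem_image_of_mem h (hQmem γ hγ))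
    · rw [intervalIntegral.integral_of_le zero_le_one, integral_Ioc_eq_integral_Ioo, hint]
      refine integral_mono_ae hhQint hψint ?_
      filter_upwards [ae_restrict_mem measurableSet_Ioo] with γ hγ
      exact le_csSup (himg_bddAbove γ) (mem_image_of_mem h (hQmem γ hγ))
  refine ⟨main, ?_, ?_⟩
  · refine le_csInf (Set.Nonempty.image _ ⟨F₀, hF₀⟩) ?_
    rintro y ⟨F, hF, rfl⟩
    exact (main F hF).1
  · refine csSup_le (Set.Nonempty.image _ ⟨F₀, hF₀⟩) ?_
    rintro y ⟨F, hF, rfl⟩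
    exact (main F hF).2
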